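/- For every fixed dimension d ≥ 1, the function m ↦ r^SS(m) is monotonically increasing: if 2 ≤ m ≤ m', then r^SS(m) ≤ r^SS(m'). -/

import Mathlib

/-!
Softmax–Softmax polynomial system: for every dimension `d ≥ 1`, `r^SS(2) = 4`,
i.e. 4 is the smallest natural number `r` such that the system of order `r`
with `m = 2` blocks admits no non-trivial solution.
-/

noncomputable section

/-- Multi-index `v ^ α := ∏ j, v j ^ α j`. -/
def mpow {d : ℕ} (v : Fin d → ℝ) (α : Fin d → ℕ) : ℝ := ∏ j, v j ^ α j

/-- Multi-index factorial `α! := ∏ j, (α j)!`. -/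
def mfact {d : ℕ} (α : Fin d → ℕ) : ℕ := ∏ j, Nat.factorial (α j)

/-- Multi-index degree `|α| := ∑ j, α j`. -/
def mdeg {d : ℕ} (α : Fin d → ℕ) : ℕ := ∑ j, α j

/-- A finite box containing every multi-index `α ≤ ρ` (coordinatewise). -/
def mIdxBox {d : ℕ} (ρ : Fin d → ℕ) : Finset (Fin d → ℕ) :=
  Fintype.piFinset fun j => Finset.range (ρ j + 1)

/-- Left-hand side of the Softmax–Softmax polynomial equation indexed by `(ρ₁, ρ₂)`:
`∑ i ∑_{α₁+α₂+α₃=ρ₁, |α₃|+α₄+2α₅=ρ₂} p_i² q_{1i}^{α₁} q₂^{α₂} q_{3i}^{α₃} q_{4i}^{α₄} q_{5i}^{α₅}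
  / (α₁! α₂! α₃! α₄! α₅!)`. -/
def ssLHS {m d : ℕ} (p : Fin m → ℝ) (q1 : Fin m → Fin d → ℝ) (q2 : Fin d → ℝ)
    (q3 : Fin m → Fin d → ℝ) (q4 q5 : Fin m → ℝ) (ρ1 : Fin d → ℕ) (ρ2 : ℕ) : ℝ :=
  ∑ i : Fin m, ∑ α1 ∈ mIdxBox ρ1, ∑ α2 ∈ mIdxBox ρ1, ∑ α3 ∈ mIdxBox ρ1,
    ∑ α4 ∈ Finset.range (ρ2 + 1), ∑ α5 ∈ Finset.range (ρ2 + 1),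
      if α1 + α2 + α3 = ρ1 ∧ mdeg α3 + α4 + 2 * α5 = ρ2 then
        (1 / ((mfact α1 : ℝ) * (mfact α2 : ℝ) * (mfact α3 : ℝ) *
            (Nat.factorial α4 : ℝ) * (Nat.factorial α5 : ℝ))) *
          p i ^ 2 * mpow (q1 i) α1 * mpow q2 α2 * mpow (q3 i) α3 *
          q4 i ^ α4 * q5 i ^ α5
      else 0

/-- The Softmax–Softmax system of order `r` (with `m` blocks, in dimension `d`)
admits a non-trivial solution: all `p_i ≠ 0`, some `q_{4i} ≠ 0`, and every equation
indexed by `(ρ₁, ρ₂)` with `1 ≤ |ρ₁| + ρ₂ ≤ r` holds. -/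
def ssHasNontrivial (m d r : ℕ) : Prop :=
  ∃ (p : Fin m → ℝ) (q1 : Fin m → Fin d → ℝ) (q2 : Fin d → ℝ)
    (q3 : Fin m → Fin d → ℝ) (q4 q5 : Fin m → ℝ),
      (∀ i, p i ≠ 0) ∧ (∃ i, q4 i ≠ 0) ∧
      ∀ (ρ1 : Fin d → ℕ) (ρ2 : ℕ), 1 ≤ mdeg ρ1 + ρ2 → mdeg ρ1 + ρ2 ≤ r →
        ssLHS p q1 q2 q3 q4 q5 ρ1 ρ2 = 0


/-- `r^SS(m)`: the smallest `r` such that the Softmax–Softmax system of order `r`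
with `m` blocks (in dimension `d`) admits no non-trivial solution. -/
def rSS (m d : ℕ) : ℕ := sInf {r : ℕ | ¬ ssHasNontrivial m d r}



section SSAux
open Finset PowerSeries Polynomial

lemma collapse (n s : ℕ) (h : ℕ → ℝ) :
    (∑ a ∈ Finset.range (n+1), if a + s = n then h a else 0)
      = if s ≤ n then h (n - s) else 0 := by
  by_cases hs : s ≤ n
  · rw [if_pos hs]
    rw [Finset.sum_eq_single (n - s)]
    · rw [if_pos (by omega)]
    · intro b _ hb; rw [if_neg (by omega)]
    · intro hmem; exact absurd (Finset.mem_range.2 (by omega)) hmem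
  · rw [if_neg hs]
    apply Finset.sum_eq_zero
    intro a _; rw [if_neg (by omega)]

/-- Taylor coefficients of exp(a t + b t²). -/
def Tc (a b : ℝ) (n : ℕ) : ℝ :=
  ∑ k ∈ Finset.range (n+1),
    if 2*k ≤ n then a^(n-2*k) * b^k / ((n-2*k).factorial * k.factorial) else 0

lemma Tc_zero (a b : ℝ) : Tc a b 0 = 1 := by
  simp [Tc]

lemma Tc_one (a b : ℝ) : Tc a b 1 = a := by
  simp [Tc, Finset.sum_range_succ]

lemma Tc_zero_pair (n : ℕ) (hn : 1 ≤ n) : Tc 0 0 n = 0 := by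
  apply Finset.sum_eq_zero
  intro k _
  split_ifs with h
  · rcases Nat.eq_zero_or_pos k with hk | hk
    · rw [show ((0:ℝ)^(n-2*k)) = 0 from zero_pow (by omega)]; simp
    · rw [show ((0:ℝ)^k) = 0 from zero_pow (by omega)]; simp
  · rfl

/-- recurrence: (n+2) Tc(n+2) = a Tc(n+1) + 2 b Tc(n) -/
lemma Tc_rec (a b : ℝ) (n : ℕ) :
    ((n:ℝ)+2) * Tc a b (n+2) = a * Tc a b (n+1) + 2 * b * Tc a b n := by
  have key : ∀ k ∈ Finset.range (n+3),
      ((n:ℝ)+2) * (if 2*k ≤ n+2 then a^(n+2-2*k) * b^k / ((n+2-2*k).factorial * k.factorial) else 0)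
      = (a * (if 2*k ≤ n+1 then a^(n+1-2*k) * b^k / ((n+1-2*k).factorial * k.factorial) else 0))
        + (2*b * (if k ≠ 0 ∧ 2*(k-1) ≤ n then a^(n-2*(k-1)) * b^(k-1) / ((n-2*(k-1)).factorial * (k-1).factorial) else 0)) := by
    intro k _
    rcases Nat.eq_zero_or_pos k with hk | hk
    · subst hk
      simp only [Nat.mul_zero, Nat.zero_le, if_true, ne_eq, not_true_eq_false, false_and,
        if_false, mul_zero, add_zero, pow_zero, Nat.sub_zero, Nat.factorial_zero, Nat.cast_one,
        mul_one]
      have h1 : ((n+2).factorial : ℝ) = ((n:ℝ)+2) * (n+1).factorial := by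
        rw [Nat.factorial_succ]; push_cast; ring
      have h2 : (((n+1).factorial : ℝ)) ≠ 0 := Nat.cast_ne_zero.2 (Nat.factorial_ne_zero _)
      rw [h1, pow_succ]
      field_simp
    · by_cases h2 : 2*k ≤ n+1
      · -- main case
        rw [if_pos (by omega), if_pos h2, if_pos (by omega)]
        have hM : n+2-2*k = (n+1-2*k)+1 := by omega
        have hN : n-2*(k-1) = (n+1-2*k)+1 := by omega
        set M := n+1-2*k with hMdef
        have hcast : (n:ℝ) = (M:ℝ) + 2*(k:ℝ) - 1 := by
          have : n = M + 2*k - 1 := by omega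
          rw [this]; push_cast [Nat.cast_sub (by omega : 1 ≤ M + 2*k)]; ring
        have hkk : k = (k-1)+1 := by omega
        have hfM : (((M+1).factorial : ℝ)) = ((M:ℝ)+1) * M.factorial := by
          rw [Nat.factorial_succ]; push_cast; ring
        have hfk : ((k.factorial : ℝ)) = (k:ℝ) * (k-1).factorial := by
          conv_lhs => rw [hkk]
          rw [Nat.factorial_succ]
          push_cast [Nat.cast_sub (by omega : 1 ≤ k)]
          ring
        have hbk : b^k = b^(k-1) * b := by conv_lhs => rw [hkk, pow_succ]
        have e1 : (((M).factorial : ℝ)) ≠ 0 := Nat.cast_ne_zero.2 (Nat.factorial_ne_zero _)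
        have e2 : (((k-1).factorial : ℝ)) ≠ 0 := Nat.cast_ne_zero.2 (Nat.factorial_ne_zero _)
        have e3 : ((M:ℝ)+1) ≠ 0 := by positivity
        have e4 : (k:ℝ) ≠ 0 := Nat.cast_ne_zero.2 (by omega)
        rw [hM, hN, hfM, hfk, hbk, pow_succ, hcast]
        field_simp
        ring
      · by_cases h3 : 2*k ≤ n+2
        · -- 2k = n+2
          rw [if_pos h3, if_neg h2, if_pos (by omega)]
          have hz : n+2-2*k = 0 := by omega
          have hz2 : n-2*(k-1) = 0 := by omega
          have hcast : (n:ℝ) = 2*(k:ℝ) - 2 := by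
            have : n = 2*k-2 := by omega
            rw [this]; push_cast [Nat.cast_sub (by omega : 2 ≤ 2*k)]; ring
          have hkk : k = (k-1)+1 := by omega
          have hfk : ((k.factorial : ℝ)) = (k:ℝ) * (k-1).factorial := by
            conv_lhs => rw [hkk]
            rw [Nat.factorial_succ]
            push_cast [Nat.cast_sub (by omega : 1 ≤ k)]
            ring
          have hbk : b^k = b^(k-1) * b := by conv_lhs => rw [hkk, pow_succ]
          have e2 : (((k-1).factorial : ℝ)) ≠ 0 := Nat.cast_ne_zero.2 (Nat.factorial_ne_zero _)
          have e4 : (k:ℝ) ≠ 0 := Nat.cast_ne_zero.2 (by omega)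
          rw [hz, hz2, hfk, hbk, hcast]
          simp only [pow_zero, Nat.factorial_zero, Nat.cast_one, one_mul, mul_zero, zero_add]
          field_simp
          ring
        · rw [if_neg h3, if_neg h2, if_neg (by push_neg; intro _; omega)]
          ring
  have lhs_eq : ((n:ℝ)+2) * Tc a b (n+2) = ∑ k ∈ Finset.range (n+3),
      ((n:ℝ)+2) * (if 2*k ≤ n+2 then a^(n+2-2*k) * b^k / ((n+2-2*k).factorial * k.factorial) else 0) := by
    rw [Tc, Finset.mul_sum]
  rw [lhs_eq, Finset.sum_congr rfl key, Finset.sum_add_distrib]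
  congr 1
  · rw [Tc, ← Finset.mul_sum]
    congr 1
    rw [Finset.sum_range_succ, if_neg (by omega)]
    simp
  · rw [Tc, ← Finset.mul_sum]
    congr 1
    rw [Finset.sum_range_succ']
    simp only [ne_eq, not_true_eq_false, false_and, if_false, add_zero, Nat.add_sub_cancel,
      Nat.succ_ne_zero, not_false_eq_true, true_and]
    rw [Finset.sum_range_succ, if_neg (by omega)]
    simp only [add_zero]

/-- the power series exp(aX + bX²) -/
def Eser (a b : ℝ) : PowerSeries ℝ := PowerSeries.mk (Tc a b)

lemma Eser_deriv (a b : ℝ) :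
    d⁄dX ℝ (Eser a b) = (PowerSeries.C a + PowerSeries.C (2*b) * PowerSeries.X) * Eser a b := by
  ext n
  rw [PowerSeries.coeff_derivative, add_mul, map_add]
  rw [← PowerSeries.smul_eq_C_mul, mul_assoc, ← PowerSeries.smul_eq_C_mul]
  rw [PowerSeries.coeff_smul, PowerSeries.coeff_smul]
  rcases n with _ | n
  · simp [Eser, Tc_zero, Tc_one]
  · rw [PowerSeries.coeff_succ_X_mul]
    simp only [Eser, PowerSeries.coeff_mk, smul_eq_mul]
    have := Tc_rec a b n
    push_cast
    push_cast at this
    nlinarith [this]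

def stp (δ1 δ2 : ℝ) (w : ℝ[X]) : ℝ[X] :=
  Polynomial.derivative w + (Polynomial.C δ1 + Polynomial.C δ2 * Polynomial.X) * w

lemma stp_zero (w : ℝ[X]) : stp 0 0 w = Polynomial.derivative w := by
  simp [stp]

lemma stp_ne_zero {δ1 δ2 : ℝ} (h : δ1 ≠ 0 ∨ δ2 ≠ 0) {w : ℝ[X]} (hw : w ≠ 0) :
    stp δ1 δ2 w ≠ 0 := by
  have hlead : w.coeff w.natDegree ≠ 0 := by
    rw [← Polynomial.leadingCoeff]
    exact Polynomial.leadingCoeff_ne_zero.mpr hw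
  by_cases h2 : δ2 = 0
  · have h1 : δ1 ≠ 0 := by tauto
    subst h2
    intro hzero
    have hc : (stp δ1 0 w).coeff w.natDegree = δ1 * w.coeff w.natDegree := by
      simp only [stp, map_zero, zero_mul, add_zero, Polynomial.coeff_add,
        Polynomial.coeff_derivative, Polynomial.coeff_C_mul]
      rw [Polynomial.coeff_eq_zero_of_natDegree_lt (by omega)]
      ring
    rw [hzero] at hc
    simp only [Polynomial.coeff_zero] at hc
    exact (mul_ne_zero h1 hlead) hc.symm
  · intro hzero
    have hc : (stp δ1 δ2 w).coeff (w.natDegree + 1) = δ2 * w.coeff w.natDegree := by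
      simp only [stp, Polynomial.coeff_add, Polynomial.coeff_derivative, add_mul,
        Polynomial.coeff_C_mul, mul_assoc]
      rw [Polynomial.coeff_eq_zero_of_natDegree_lt (by omega : w.natDegree < w.natDegree + 1 + 1),
        Polynomial.coeff_eq_zero_of_natDegree_lt (by omega : w.natDegree < w.natDegree + 1),
        Polynomial.coeff_X_mul]
      ring
    rw [hzero] at hc
    simp only [Polynomial.coeff_zero] at hc
    exact (mul_ne_zero h2 hlead) hc.symm

lemma stp_natDegree (δ1 δ2 : ℝ) (w : ℝ[X]) : (stp δ1 δ2 w).natDegree ≤ w.natDegree + 1 := by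
  apply le_trans (Polynomial.natDegree_add_le _ _)
  apply max_le
  · exact le_trans (Polynomial.natDegree_derivative_le w) (by omega)
  · apply le_trans (Polynomial.natDegree_mul_le)
    have : (Polynomial.C δ1 + Polynomial.C δ2 * Polynomial.X).natDegree ≤ 1 := by
      apply le_trans (Polynomial.natDegree_add_le _ _)
      apply max_le (by simp)
      exact le_trans Polynomial.natDegree_mul_le (by simp)
    omega

lemma stp_iter_ne_zero {δ1 δ2 : ℝ} (h : δ1 ≠ 0 ∨ δ2 ≠ 0) {w : ℝ[X]} (hw : w ≠ 0) (t : ℕ) :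
    (stp δ1 δ2)^[t] w ≠ 0 := by
  induction t with
  | zero => exact hw
  | succ t ih => rw [Function.iterate_succ_apply']; exact stp_ne_zero h ih

lemma stp_iter_natDegree (δ1 δ2 : ℝ) (w : ℝ[X]) (t : ℕ) :
    ((stp δ1 δ2)^[t] w).natDegree ≤ w.natDegree + t := by
  induction t with
  | zero => simp
  | succ t ih =>
    rw [Function.iterate_succ_apply']
    exact le_trans (stp_natDegree _ _ _) (by omega)

/-- the key commuting identity: applying (D - (C a0 + C 2b0 X)·) to w·E(a,b) -/
lemma Lop_term (a0 b0 a b : ℝ) (w : ℝ[X]) :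
    d⁄dX ℝ ((w : ℝ⟦X⟧) * Eser a b)
      - (PowerSeries.C a0 + PowerSeries.C (2*b0) * PowerSeries.X) * ((w : ℝ⟦X⟧) * Eser a b)
    = ((stp (a - a0) (2*b - 2*b0) w : ℝ[X]) : ℝ⟦X⟧) * Eser a b := by
  rw [Derivation.leibniz, Eser_deriv]
  simp only [stp, Polynomial.coe_add, Polynomial.coe_mul, Polynomial.coe_C, Polynomial.coe_X]
  rw [PowerSeries.derivative_coe]
  simp only [smul_eq_mul]
  push_cast
  ring_nf
  simp only [map_sub, map_mul, map_ofNat]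
  ring_nf

lemma coeff_mul_eq_zero (g f : ℝ⟦X⟧) (ℓ : ℕ) (h : ∀ j ≤ ℓ, PowerSeries.coeff j f = 0) :
    PowerSeries.coeff ℓ (g * f) = 0 := by
  rw [PowerSeries.coeff_mul]
  apply Finset.sum_eq_zero
  intro p hp
  rw [Finset.HasAntidiagonal.mem_antidiagonal] at hp
  rw [h p.2 (by omega)]
  ring

/-- iterated elimination keeps truncated vanishing -/
lemma iter_vanish (S : Finset (ℝ×ℝ)) (W : ℝ×ℝ → ℝ[X]) (z0 : ℝ×ℝ) (K : ℕ)
    (hvan : ∀ ℓ ≤ K, PowerSeries.coeff ℓ (∑ z ∈ S, ((W z : ℝ[X]) : ℝ⟦X⟧) * Eser z.1 z.2) = 0)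
    (t : ℕ) :
    ∀ ℓ, ℓ + t ≤ K → PowerSeries.coeff ℓ
      (∑ z ∈ S, (((stp (z.1 - z0.1) (2*z.2 - 2*z0.2))^[t] (W z) : ℝ[X]) : ℝ⟦X⟧) * Eser z.1 z.2) = 0 := by
  induction t with
  | zero => intro ℓ hl; exact hvan ℓ (by omega)
  | succ t ih =>
    intro ℓ hl
    set F : ℝ⟦X⟧ := ∑ z ∈ S, (((stp (z.1 - z0.1) (2*z.2 - 2*z0.2))^[t] (W z) : ℝ[X]) : ℝ⟦X⟧) * Eser z.1 z.2 with hF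
    have hstep : (∑ z ∈ S, (((stp (z.1 - z0.1) (2*z.2 - 2*z0.2))^[t+1] (W z) : ℝ[X]) : ℝ⟦X⟧) * Eser z.1 z.2)
        = d⁄dX ℝ F - (PowerSeries.C z0.1 + PowerSeries.C (2*z0.2) * PowerSeries.X) * F := by
      rw [hF, map_sum, Finset.mul_sum, ← Finset.sum_sub_distrib]
      apply Finset.sum_congr rfl
      intro z _
      rw [Function.iterate_succ_apply', Lop_term]
    rw [hstep, map_sub]
    rw [PowerSeries.coeff_derivative]
    rw [ih (ℓ+1) (by omega)]
    rw [coeff_mul_eq_zero _ _ _ (fun j hj => ih j (by omega))]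
    ring
  
def Bnd : ℕ → ℕ → ℕ
  | 0, D => D
  | (n+1), D => Bnd n (2*D+1) + D + 1

lemma Bnd_mono_D {D D' : ℕ} (h : D ≤ D') : ∀ n, Bnd n D ≤ Bnd n D' := by
  intro n
  induction n generalizing D D' h with
  | zero => exact h
  | succ n ih => simp only [Bnd]; have := @ih (2*D+1) (2*D'+1) (by omega); omega

lemma Bnd_mono_D' : ∀ n, ∀ {D D' : ℕ}, D ≤ D' → Bnd n D ≤ Bnd n D' := by
  intro n
  induction n with
  | zero => intro D D' h; exact h
  | succ n ih => intro D D' h; simp only [Bnd]; have := ih (show 2*D+1 ≤ 2*D'+1 by omega); omega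

lemma Bnd_mono_n {n n' : ℕ} (h : n ≤ n') (D : ℕ) : Bnd n D ≤ Bnd n' D := by
  induction n' with
  | zero => simp_all
  | succ n' ih =>
    rcases Nat.lt_or_ge n (n'+1) with h1 | h1
    · have h2 : Bnd n D ≤ Bnd n' D := ih (by omega)
      have h3 : Bnd n' D ≤ Bnd (n'+1) D := by
        simp only [Bnd]
        have := Bnd_mono_D' n' (show D ≤ 2*D+1 by omega)
        omega
      omega
    · have : n = n'+1 := by omega
      subst this; rfl

/-- Main induction: no nonzero polynomial-weighted combination of distinct Eser's
can vanish to high order. -/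
lemma key_induction : ∀ (n D K : ℕ) (S : Finset (ℝ×ℝ)) (W : ℝ×ℝ → ℝ[X]),
    S.card = n + 1 →
    (∀ z ∈ S, W z ≠ 0) → (∀ z ∈ S, (W z).natDegree ≤ D) →
    (∀ ℓ ≤ K, PowerSeries.coeff ℓ (∑ z ∈ S, ((W z : ℝ[X]) : ℝ⟦X⟧) * Eser z.1 z.2) = 0) →
    Bnd n D ≤ K → False := by
  intro n
  induction n with
  | zero =>
    intro D K S W hcard hne hdeg hvan hB
    obtain ⟨z, hz⟩ := Finset.card_eq_one.mp hcard
    subst hz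
    rw [Finset.sum_singleton] at hvan
    set w := W z with hw
    have hwne : w ≠ 0 := hne z (Finset.mem_singleton_self z)
    set ν := w.natTrailingDegree with hν
    have hν1 : ν ≤ K := by
      have := Polynomial.natTrailingDegree_le_natDegree w
      have h2 : w.natDegree ≤ D := by rw [hw]; exact hdeg z (Finset.mem_singleton_self z)
      simp only [Bnd] at hB
      omega
    have := hvan ν hν1
    rw [PowerSeries.coeff_mul] at this
    rw [Finset.sum_eq_single (ν, 0)] at this
    · simp only [Polynomial.coeff_coe, Eser, PowerSeries.coeff_mk, Tc_zero, mul_one] at this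
      exact (Polynomial.coeff_natTrailingDegree_ne_zero.mpr hwne) this
    · intro p hp hpne
      rw [Finset.HasAntidiagonal.mem_antidiagonal] at hp
      have hp1 : p.1 < ν := by
        rcases Nat.lt_or_ge p.1 ν with h | h
        · exact h
        · exfalso; apply hpne
          have : p.1 = ν := by omega
          have : p.2 = 0 := by omega
          ext <;> simp_all
      rw [Polynomial.coeff_coe, Polynomial.coeff_eq_zero_of_lt_natTrailingDegree hp1]
      ring
    · intro h; exact absurd (Finset.HasAntidiagonal.mem_antidiagonal.mpr (by simp)) h
  | succ n ih =>
    intro D K S W hcard hne hdeg hvan hB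
    have hS : S.Nonempty := Finset.card_pos.mp (by omega)
    obtain ⟨z0, hz0⟩ := hS
    -- apply D+1 elimination steps
    set W' : ℝ×ℝ → ℝ[X] := fun z => (stp (z.1 - z0.1) (2*z.2 - 2*z0.2))^[D+1] (W z) with hW'
    have hvan' : ∀ ℓ, ℓ + (D+1) ≤ K →
        PowerSeries.coeff ℓ (∑ z ∈ S, ((W' z : ℝ[X]) : ℝ⟦X⟧) * Eser z.1 z.2) = 0 :=
      fun ℓ hl => iter_vanish S W z0 K hvan (D+1) ℓ hl
    -- the z0 term dies
    have hz0dead : W' z0 = 0 := by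
      rw [hW']
      simp only [sub_self]
      have : ∀ t w, (stp (0:ℝ) (0:ℝ))^[t] w = (Polynomial.derivative (R := ℝ))^[t] w := by
        intro t
        induction t with
        | zero => intro w; rfl
        | succ t iht => intro w; rw [Function.iterate_succ_apply', Function.iterate_succ_apply', stp_zero, iht]
      rw [this]
      apply Polynomial.iterate_derivative_eq_zero
      have := hdeg z0 hz0
      omega
    have hvan'' : ∀ ℓ, ℓ + (D+1) ≤ K →
        PowerSeries.coeff ℓ (∑ z ∈ S.erase z0, ((W' z : ℝ[X]) : ℝ⟦X⟧) * Eser z.1 z.2) = 0 := by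
      intro ℓ hl
      rw [← Finset.add_sum_erase S _ hz0] at hvan'
      · have := hvan' ℓ hl
        rw [hz0dead] at this
        simpa using this
    -- apply induction hypothesis
    have hcard' : (S.erase z0).card = n + 1 := by
      rw [Finset.card_erase_of_mem hz0]; omega
    have hBsplit : Bnd (n+1) D = Bnd n (2*D+1) + D + 1 := rfl
    apply ih (2*D+1) (K - (D+1)) (S.erase z0) W' hcard'
    · intro z hzmem
      have hzne : z ≠ z0 := Finset.ne_of_mem_erase hzmem
      have hdelta : z.1 - z0.1 ≠ 0 ∨ 2*z.2 - 2*z0.2 ≠ 0 := by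
        by_contra hcon
        push_neg at hcon
        apply hzne
        have h1 : z.1 = z0.1 := by have := hcon.1; linarith [sub_eq_zero.mp this]
        have h2 : z.2 = z0.2 := by have := hcon.2; nlinarith [this]
        exact Prod.ext h1 h2
      exact stp_iter_ne_zero hdelta (hne z (Finset.mem_of_mem_erase hzmem)) (D+1)
    · intro z hzmem
      have := stp_iter_natDegree (z.1 - z0.1) (2*z.2 - 2*z0.2) (W z) (D+1)
      have := hdeg z (Finset.mem_of_mem_erase hzmem)
      simp only [hW']
      omega
    · intro ℓ hl
      exact hvan'' ℓ (by omega)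
    · omega

lemma mIdxBox_zero {d : ℕ} : mIdxBox (0 : Fin d → ℕ) = {0} := by
  ext α
  simp only [mIdxBox, Fintype.mem_piFinset, Finset.mem_range, Finset.mem_singleton]
  constructor
  · intro h; funext j; have := h j; simp at this ⊢; omega
  · intro h; subst h; intro j; simp

@[simp] lemma mdeg_zero {d : ℕ} : mdeg (0 : Fin d → ℕ) = 0 := by simp [mdeg]
@[simp] lemma mpow_zero_idx {d : ℕ} (v : Fin d → ℝ) : mpow v 0 = 1 := by simp [mpow]
@[simp] lemma mfact_zero_idx {d : ℕ} : mfact (0 : Fin d → ℕ) = 1 := by simp [mfact]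

/-- ssLHS at ρ1 = 0 -/
lemma ssLHS_rho1_zero {m d : ℕ} (p : Fin m → ℝ) (q1 : Fin m → Fin d → ℝ) (q2 : Fin d → ℝ)
    (q3 : Fin m → Fin d → ℝ) (q4 q5 : Fin m → ℝ) (ρ2 : ℕ) :
    ssLHS p q1 q2 q3 q4 q5 0 ρ2 = ∑ i : Fin m, p i ^ 2 * Tc (q4 i) (q5 i) ρ2 := by
  unfold ssLHS
  apply Finset.sum_congr rfl
  intro i _
  rw [mIdxBox_zero, Finset.sum_singleton, Finset.sum_singleton, Finset.sum_singleton]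
  simp only [add_zero, mdeg_zero, mpow_zero_idx, mfact_zero_idx, Nat.cast_one, one_mul, mul_one,
    zero_add, true_and]
  rw [Tc, Finset.mul_sum]
  rw [Finset.sum_comm]
  apply Finset.sum_congr rfl
  intro α5 _
  have hcol := collapse ρ2 (2*α5) (fun a => 1 / ((a.factorial:ℝ) * α5.factorial) * p i ^2 * q4 i ^ a * q5 i ^ α5)
  beta_reduce at hcol
  rw [hcol]
  split_ifs with h
  · ring
  · simp

/-- single variable Vandermonde / exponential identity -/
lemma vdm (n : ℕ) (x y : ℝ) :
    (∑ a ∈ Finset.range (n+1), ∑ b ∈ Finset.range (n+1),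
      if a + b = n then x^a * y^b / (a.factorial * b.factorial) else 0)
    = (x+y)^n / n.factorial := by
  have h1 : ∀ a ∈ Finset.range (n+1), (∑ b ∈ Finset.range (n+1),
      if a + b = n then x^a * y^b / (a.factorial * b.factorial) else 0)
      = if a ≤ n then x^a * y^(n-a) / (a.factorial * (n-a).factorial) else 0 := by
    intro a _
    have := collapse n a (fun b => x^a * y^b / (a.factorial * b.factorial))
    beta_reduce at this
    rw [← this]
    apply Finset.sum_congr rfl
    intro b _
    exact if_congr (by constructor <;> omega) rfl rfl
  rw [Finset.sum_congr rfl h1]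
  have h2 : ∀ a ∈ Finset.range (n+1),
      (if a ≤ n then x^a * y^(n-a) / (a.factorial * (n-a).factorial) else 0)
      = x^a * y^(n-a) * (n.choose a) / n.factorial := by
    intro a ha
    rw [Finset.mem_range] at ha
    rw [if_pos (by omega)]
    have hfac : (n.choose a) * (a.factorial * (n-a).factorial) = n.factorial := by
      rw [← Nat.choose_mul_factorial_mul_factorial (show a ≤ n by omega)]
      ring
    have h3 : ((a.factorial : ℝ) * (n-a).factorial) ≠ 0 := by
      have := a.factorial_ne_zero
      have := (n-a).factorial_ne_zero
      positivity
    have h4 : ((n.factorial : ℝ)) ≠ 0 := Nat.cast_ne_zero.mpr n.factorial_ne_zero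
    rw [div_eq_div_iff h3 h4]
    have : ((n.factorial : ℝ)) = (n.choose a) * ((a.factorial : ℝ) * (n-a).factorial) := by
      rw [← hfac]; push_cast; ring
    rw [this]
    ring
  rw [Finset.sum_congr rfl h2, add_pow, Finset.sum_div]

/-- multi-index Vandermonde -/
lemma multiVdm {d : ℕ} (ρ : Fin d → ℕ) (v w : Fin d → ℝ) :
    (∑ α1 ∈ mIdxBox ρ, ∑ α2 ∈ mIdxBox ρ,
      if α1 + α2 = ρ then mpow v α1 * mpow w α2 / ((mfact α1 : ℝ) * (mfact α2 : ℝ)) else 0)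
    = ∏ j, (v j + w j)^(ρ j) / (ρ j).factorial := by
  have hterm : ∀ α1 ∈ mIdxBox ρ, ∀ α2 ∈ mIdxBox ρ,
      (if α1 + α2 = ρ then mpow v α1 * mpow w α2 / ((mfact α1 : ℝ) * (mfact α2 : ℝ)) else 0)
      = ∏ j, (if α1 j + α2 j = ρ j then v j ^ (α1 j) * w j ^ (α2 j) / (((α1 j).factorial : ℝ) * ((α2 j).factorial : ℝ)) else 0) := by
    intro α1 _ α2 _
    by_cases h : α1 + α2 = ρ
    · rw [if_pos h]
      have hj : ∀ j, α1 j + α2 j = ρ j := fun j => by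
        have := congrFun h j; simpa using this
      rw [Finset.prod_congr rfl (fun j _ => if_pos (hj j))]
      rw [mpow, mpow, mfact, mfact]
      push_cast
      rw [← Finset.prod_mul_distrib, ← Finset.prod_mul_distrib, ← Finset.prod_div_distrib]
    · rw [if_neg h]
      have : ∃ j, α1 j + α2 j ≠ ρ j := by
        by_contra hcon
        push_neg at hcon
        exact h (funext fun j => by simpa using hcon j)
      obtain ⟨j, hjne⟩ := this
      rw [eq_comm]
      apply Finset.prod_eq_zero (Finset.mem_univ j)
      rw [if_neg hjne]
  rw [Finset.sum_congr rfl (fun α1 h1 => Finset.sum_congr rfl (fun α2 h2 => hterm α1 h1 α2 h2))]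
  have step2 : ∀ α1 ∈ mIdxBox ρ,
      (∑ α2 ∈ mIdxBox ρ, ∏ j, (if α1 j + α2 j = ρ j then v j ^ (α1 j) * w j ^ (α2 j) / (((α1 j).factorial : ℝ) * ((α2 j).factorial : ℝ)) else 0))
      = ∏ j, ∑ b ∈ Finset.range (ρ j + 1), (if α1 j + b = ρ j then v j ^ (α1 j) * w j ^ b / (((α1 j).factorial : ℝ) * ((b).factorial : ℝ)) else 0) := by
    intro α1 _
    exact (Finset.prod_univ_sum (fun j => Finset.range (ρ j + 1))
      (fun j b => if α1 j + b = ρ j then v j ^ (α1 j) * w j ^ b / (((α1 j).factorial : ℝ) * ((b).factorial : ℝ)) else 0)).symm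
  rw [Finset.sum_congr rfl step2]
  refine Eq.trans ((Finset.prod_univ_sum (fun j => Finset.range (ρ j + 1))
      (fun j a => ∑ b ∈ Finset.range (ρ j + 1),
        if a + b = ρ j then v j ^ a * w j ^ b / ((a.factorial : ℝ) * (b.factorial : ℝ)) else 0)).symm) ?_
  apply Finset.prod_congr rfl
  intro j _
  exact vdm (ρ j) (v j) (w j)

lemma ss_finite (m d : ℕ) : ¬ ssHasNontrivial m d (Bnd m 0) := by
  rintro ⟨p, q1, q2, q3, q4, q5, hp, ⟨i0, hi0⟩, heq⟩
  set r := Bnd m 0 with hr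
  set c : Fin m → ℝ := fun i => p i ^ 2 with hc
  set pr : Fin m → ℝ × ℝ := fun i => (q4 i, q5 i) with hpr
  set S0 : Finset (ℝ × ℝ) := (Finset.image pr Finset.univ) ∪ {((0:ℝ), (0:ℝ))} with hS0
  set Wgt : ℝ × ℝ → ℝ := fun z =>
    (∑ i ∈ Finset.univ.filter (fun i => pr i = z), c i)
      - (if z = ((0:ℝ),(0:ℝ)) then ∑ i, c i else 0) with hWgt
  set S : Finset (ℝ × ℝ) := S0.filter (fun z => Wgt z ≠ 0) with hS
  -- the weighted sums over S0 compute the ssLHS coefficients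
  have hsum : ∀ g : ℝ × ℝ → ℝ, ∑ z ∈ S, Wgt z * g z
      = (∑ i, c i * g (pr i)) - (∑ i, c i) * g ((0:ℝ),(0:ℝ)) := by
    intro g
    have h1 : ∑ z ∈ S, Wgt z * g z = ∑ z ∈ S0, Wgt z * g z := by
      rw [hS]
      apply Finset.sum_filter_of_ne
      intro z _ hz hcon
      apply hz
      rw [hcon, zero_mul]
    rw [h1, hWgt]
    simp only [sub_mul]
    rw [Finset.sum_sub_distrib]
    congr 1
    · -- fiberwise
      have h2 : ∀ z ∈ S0, (∑ i ∈ Finset.univ.filter (fun i => pr i = z), c i) * g z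
          = ∑ i ∈ Finset.univ.filter (fun i => pr i = z), c i * g (pr i) := by
        intro z _
        rw [Finset.sum_mul]
        apply Finset.sum_congr rfl
        intro i hi
        rw [Finset.mem_filter] at hi
        rw [hi.2]
      rw [Finset.sum_congr rfl h2]
      apply Finset.sum_fiberwise_of_maps_to
      intro i _
      rw [hS0]
      exact Finset.mem_union_left _ (Finset.mem_image_of_mem pr (Finset.mem_univ i))
    · have h3 : ∀ z ∈ S0, (if z = ((0:ℝ),(0:ℝ)) then ∑ i, c i else 0) * g z
          = (if z = ((0:ℝ),(0:ℝ)) then (∑ i, c i) * g ((0:ℝ),(0:ℝ)) else 0) := by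
        intro z _
        split_ifs with h
        · rw [h]
        · rw [zero_mul]
      rw [Finset.sum_congr rfl h3, Finset.sum_ite_eq']
      rw [if_pos]
      rw [hS0]
      exact Finset.mem_union_right _ (Finset.mem_singleton_self _)
  -- vanishing of the coefficients
  have hvan : ∀ ℓ ≤ r, PowerSeries.coeff ℓ
      (∑ z ∈ S, ((Polynomial.C (Wgt z) : ℝ[X]) : ℝ⟦X⟧) * Eser z.1 z.2) = 0 := by
    intro ℓ hl
    have hco : PowerSeries.coeff ℓ (∑ z ∈ S, ((Polynomial.C (Wgt z) : ℝ[X]) : ℝ⟦X⟧) * Eser z.1 z.2)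
        = ∑ z ∈ S, Wgt z * Tc z.1 z.2 ℓ := by
      rw [map_sum]
      apply Finset.sum_congr rfl
      intro z _
      rw [Polynomial.coe_C, PowerSeries.coeff_C_mul]
      rw [Eser, PowerSeries.coeff_mk]
    rw [hco, hsum (fun z => Tc z.1 z.2 ℓ)]
    rcases Nat.eq_zero_or_pos ℓ with h0 | h0
    · subst h0
      simp only [Tc_zero, mul_one]
      ring
    · rw [Tc_zero_pair ℓ h0, mul_zero, sub_zero]
      have := heq 0 ℓ (by simp only [mdeg_zero, zero_add]; omega) (by simpa [mdeg] using hl)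
      rw [ssLHS_rho1_zero] at this
      exact this
  -- S is nonempty
  have hzstar : pr i0 ∈ S := by
    rw [hS, Finset.mem_filter]
    constructor
    · rw [hS0]; exact Finset.mem_union_left _ (Finset.mem_image_of_mem pr (Finset.mem_univ i0))
    · simp only [hWgt]
      have hne0 : pr i0 ≠ ((0:ℝ),(0:ℝ)) := by
        intro hcon
        apply hi0
        have := congrArg Prod.fst hcon
        simpa [hpr] using this
      rw [if_neg hne0, sub_zero]
      apply ne_of_gt
      apply Finset.sum_pos
      · intro i _
        exact pow_two_pos_of_ne_zero (hp i)
      · exact ⟨i0, Finset.mem_filter.mpr ⟨Finset.mem_univ _, rfl⟩⟩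
  -- cardinality bound and conclusion
  have hcard : S.card ≤ m + 1 := by
    have h1 : S.card ≤ S0.card := Finset.card_filter_le _ _
    have h2 : S0.card ≤ (Finset.image pr Finset.univ).card + 1 := by
      rw [hS0]
      exact le_trans (Finset.card_union_le _ _) (by simp)
    have h3 : (Finset.image pr Finset.univ).card ≤ m := by
      exact le_trans (Finset.card_image_le) (by simp)
    omega
  have hSne : S.Nonempty := ⟨pr i0, hzstar⟩
  have hcard1 : 1 ≤ S.card := Finset.card_pos.mpr hSne
  apply key_induction (S.card - 1) 0 r S (fun z => Polynomial.C (Wgt z))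
  · omega
  · intro z hzS
    rw [hS, Finset.mem_filter] at hzS
    simpa using hzS.2
  · intro z _
    simp
  · exact hvan
  · exact le_trans (Bnd_mono_n (by omega) 0) (le_of_eq hr.symm)

/-- a single block's contribution -/
def blockSum {d : ℕ} (P : ℝ) (Q1 Q2 Q3 : Fin d → ℝ) (Q4 Q5 : ℝ) (ρ1 : Fin d → ℕ) (ρ2 : ℕ) : ℝ :=
  ∑ α1 ∈ mIdxBox ρ1, ∑ α2 ∈ mIdxBox ρ1, ∑ α3 ∈ mIdxBox ρ1,
    ∑ α4 ∈ Finset.range (ρ2 + 1), ∑ α5 ∈ Finset.range (ρ2 + 1),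
      if α1 + α2 + α3 = ρ1 ∧ mdeg α3 + α4 + 2 * α5 = ρ2 then
        (1 / ((mfact α1 : ℝ) * (mfact α2 : ℝ) * (mfact α3 : ℝ) *
            (Nat.factorial α4 : ℝ) * (Nat.factorial α5 : ℝ))) *
          P ^ 2 * mpow Q1 α1 * mpow Q2 α2 * mpow Q3 α3 * Q4 ^ α4 * Q5 ^ α5
      else 0

lemma ssLHS_eq_blockSum {m d : ℕ} (p : Fin m → ℝ) (q1 : Fin m → Fin d → ℝ) (q2 : Fin d → ℝ)
    (q3 : Fin m → Fin d → ℝ) (q4 q5 : Fin m → ℝ) (ρ1 : Fin d → ℕ) (ρ2 : ℕ) :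
    ssLHS p q1 q2 q3 q4 q5 ρ1 ρ2
      = ∑ i : Fin m, blockSum (p i) (q1 i) q2 (q3 i) (q4 i) (q5 i) ρ1 ρ2 := rfl

lemma mdeg_eq_zero_iff {d : ℕ} (α : Fin d → ℕ) : mdeg α = 0 ↔ α = 0 := by
  rw [mdeg, Finset.sum_eq_zero_iff]
  constructor
  · intro h; funext j; simpa using h j (Finset.mem_univ j)
  · intro h; subst h; simp

lemma mpow_zero_base {d : ℕ} {α : Fin d → ℕ} (h : α ≠ 0) : mpow (0 : Fin d → ℝ) α = 0 := by
  have : ∃ j, α j ≠ 0 := by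
    by_contra hcon; push_neg at hcon
    exact h (funext fun j => hcon j)
  obtain ⟨j, hj⟩ := this
  apply Finset.prod_eq_zero (Finset.mem_univ j)
  simp only [Pi.zero_apply]
  exact zero_pow hj

/-- null block contributes zero -/
lemma nullBlock {d : ℕ} (q2 : Fin d → ℝ) (ρ1 : Fin d → ℕ) (ρ2 : ℕ) (h : 1 ≤ mdeg ρ1 + ρ2) :
    blockSum 1 (fun j => -q2 j) q2 0 0 0 ρ1 ρ2 = 0 := by
  rcases Nat.eq_zero_or_pos ρ2 with h2 | h2
  · -- ρ2 = 0 and mdeg ρ1 ≥ 1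
    subst h2
    have hρ1 : 1 ≤ mdeg ρ1 := by omega
    unfold blockSum
    simp only [zero_add, Finset.sum_range_one]
    -- now sums over α1 α2 α3 with α4 = α5 = 0
    have hα3 : ∀ α1 ∈ mIdxBox ρ1, ∀ α2 ∈ mIdxBox ρ1,
        (∑ α3 ∈ mIdxBox ρ1,
          if α1 + α2 + α3 = ρ1 ∧ mdeg α3 + 0 + 2 * 0 = 0 then
            (1 / ((mfact α1 : ℝ) * (mfact α2 : ℝ) * (mfact α3 : ℝ) *
                (Nat.factorial 0 : ℝ) * (Nat.factorial 0 : ℝ))) *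
              (1:ℝ) ^ 2 * mpow (fun j => -q2 j) α1 * mpow q2 α2 * mpow 0 α3 * (0:ℝ) ^ (0:ℕ) * (0:ℝ) ^ (0:ℕ)
          else 0)
        = (if α1 + α2 = ρ1 then mpow (fun j => -q2 j) α1 * mpow q2 α2 / ((mfact α1 : ℝ) * (mfact α2 : ℝ)) else 0) := by
      intro α1 _ α2 _
      rw [Finset.sum_eq_single (0 : Fin d → ℕ)]
      · by_cases hc : α1 + α2 = ρ1
        · rw [if_pos (⟨by simpa using hc, by simp [mdeg]⟩ :
            α1 + α2 + 0 = ρ1 ∧ mdeg (0 : Fin d → ℕ) + 0 + 2 * 0 = 0), if_pos hc]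
          have e1 : mpow (0 : Fin d → ℝ) (0 : Fin d → ℕ) = 1 := by simp [mpow]
          have e2 : mfact (0 : Fin d → ℕ) = 1 := by simp [mfact]
          rw [e1, e2]
          push_cast
          norm_num
          ring
        · rw [if_neg (fun hcon => hc (by simpa using hcon.1)), if_neg hc]
      · intro α3 _ hne
        split_ifs with hcond
        · exfalso
          apply hne
          have := hcond.2
          rw [← mdeg_eq_zero_iff]
          omega
        · rfl
      · intro hmem
        exfalso
        apply hmem
        simp [mIdxBox, Fintype.mem_piFinset]
    rw [Finset.sum_congr rfl (fun α1 h1 => Finset.sum_congr rfl (fun α2 h2 => hα3 α1 h1 α2 h2))]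
    rw [multiVdm]
    have : ∃ j, ρ1 j ≠ 0 := by
      by_contra hcon; push_neg at hcon
      have : mdeg ρ1 = 0 := Finset.sum_eq_zero (fun j _ => hcon j)
      omega
    obtain ⟨j, hj⟩ := this
    apply Finset.prod_eq_zero (Finset.mem_univ j)
    rw [show -q2 j + q2 j = 0 by ring, zero_pow hj]
    simp
  · -- ρ2 ≥ 1: every summand vanishes
    unfold blockSum
    apply Finset.sum_eq_zero; intro α1 _
    apply Finset.sum_eq_zero; intro α2 _
    apply Finset.sum_eq_zero; intro α3 _
    apply Finset.sum_eq_zero; intro α4 _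
    apply Finset.sum_eq_zero; intro α5 _
    split_ifs with hcond
    · rcases Nat.eq_zero_or_pos α4 with h4 | h4
      · rcases Nat.eq_zero_or_pos α5 with h5 | h5
        · have h3 : mdeg α3 ≥ 1 := by omega
          have : α3 ≠ 0 := by
            intro hcon; rw [hcon] at h3; simp [mdeg] at h3
          rw [mpow_zero_base this]
          ring
        · rw [zero_pow (by omega : α5 ≠ 0)]
          ring
      · rw [zero_pow (by omega : α4 ≠ 0)]
        ring
    · rfl

/-- padding: a nontrivial solution extends to more blocks -/
lemma ss_pad {m m' d r : ℕ} (hmm : m ≤ m') (h : ssHasNontrivial m d r) :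
    ssHasNontrivial m' d r := by
  obtain ⟨p, q1, q2, q3, q4, q5, hp, ⟨i0, hi0⟩, heq⟩ := h
  refine ⟨fun i => if h : (i : ℕ) < m then p ⟨i, h⟩ else 1,
    fun i => if h : (i : ℕ) < m then q1 ⟨i, h⟩ else (fun j => -q2 j),
    q2,
    fun i => if h : (i : ℕ) < m then q3 ⟨i, h⟩ else 0,
    fun i => if h : (i : ℕ) < m then q4 ⟨i, h⟩ else 0,
    fun i => if h : (i : ℕ) < m then q5 ⟨i, h⟩ else 0,
    ?_, ?_, ?_⟩
  · intro i
    beta_reduce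
    by_cases hi : (i : ℕ) < m
    · rw [dif_pos hi]; exact hp _
    · rw [dif_neg hi]; exact one_ne_zero
  · refine ⟨Fin.castLE hmm i0, ?_⟩
    have hlt : ((Fin.castLE hmm i0 : Fin m') : ℕ) < m := i0.isLt
    beta_reduce
    rw [dif_pos hlt]
    simpa using hi0
  · intro ρ1 ρ2 hlow hhigh
    rw [ssLHS_eq_blockSum]
    rw [← Finset.sum_filter_add_sum_filter_not Finset.univ (fun i : Fin m' => (i : ℕ) < m)]
    have hnull : ∀ i ∈ Finset.univ.filter (fun i : Fin m' => ¬ (i : ℕ) < m),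
        blockSum (if h : (i : ℕ) < m then p ⟨i, h⟩ else 1)
          (if h : (i : ℕ) < m then q1 ⟨i, h⟩ else (fun j => -q2 j)) q2
          (if h : (i : ℕ) < m then q3 ⟨i, h⟩ else 0)
          (if h : (i : ℕ) < m then q4 ⟨i, h⟩ else 0)
          (if h : (i : ℕ) < m then q5 ⟨i, h⟩ else 0) ρ1 ρ2 = 0 := by
      intro i hi
      rw [Finset.mem_filter] at hi
      rw [dif_neg hi.2, dif_neg hi.2, dif_neg hi.2, dif_neg hi.2, dif_neg hi.2]
      exact nullBlock q2 ρ1 ρ2 hlow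
    rw [Finset.sum_eq_zero hnull, add_zero]
    have himg : Finset.univ.filter (fun i : Fin m' => (i : ℕ) < m)
        = Finset.image (Fin.castLE hmm) Finset.univ := by
      ext i
      simp only [Finset.mem_filter, Finset.mem_univ, true_and, Finset.mem_image]
      constructor
      · intro hi
        exact ⟨⟨(i : ℕ), hi⟩, by ext; simp⟩
      · rintro ⟨j, rfl⟩
        simp only [Fin.coe_castLE]
        exact j.isLt
    rw [himg, Finset.sum_image (fun a _ b _ hab => Fin.castLE_injective hmm hab)]
    have hterm : ∀ j : Fin m,
        blockSum (if h : ((Fin.castLE hmm j : Fin m') : ℕ) < m then p ⟨(Fin.castLE hmm j : Fin m'), h⟩ else 1)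
          (if h : ((Fin.castLE hmm j : Fin m') : ℕ) < m then q1 ⟨(Fin.castLE hmm j : Fin m'), h⟩ else (fun j => -q2 j)) q2
          (if h : ((Fin.castLE hmm j : Fin m') : ℕ) < m then q3 ⟨(Fin.castLE hmm j : Fin m'), h⟩ else 0)
          (if h : ((Fin.castLE hmm j : Fin m') : ℕ) < m then q4 ⟨(Fin.castLE hmm j : Fin m'), h⟩ else 0)
          (if h : ((Fin.castLE hmm j : Fin m') : ℕ) < m then q5 ⟨(Fin.castLE hmm j : Fin m'), h⟩ else 0) ρ1 ρ2
        = blockSum (p j) (q1 j) q2 (q3 j) (q4 j) (q5 j) ρ1 ρ2 := by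
      intro j
      have hlt : ((Fin.castLE hmm j : Fin m') : ℕ) < m := by simp [Fin.coe_castLE]
      rw [dif_pos hlt, dif_pos hlt, dif_pos hlt, dif_pos hlt, dif_pos hlt]
      congr 1 <;> simp [Fin.coe_castLE]
    rw [Finset.sum_congr rfl (fun j _ => hterm j)]
    rw [← ssLHS_eq_blockSum]
    exact heq ρ1 ρ2 hlow hhigh

end SSAux

/-- For every fixed dimension `d ≥ 1`, the function `m ↦ r^SS(m)` is monotonically
increasing: if `2 ≤ m ≤ m'` then `r^SS(m) ≤ r^SS(m')`. -/
theorem rSS_mono (d : ℕ) (hd : 1 ≤ d) (m m' : ℕ) (hm : 2 ≤ m) (hmm : m ≤ m') :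
    rSS m d ≤ rSS m' d := by
  have hne : {r : ℕ | ¬ ssHasNontrivial m' d r}.Nonempty := ⟨Bnd m' 0, ss_finite m' d⟩
  have hmem : ¬ ssHasNontrivial m' d (rSS m' d) := Nat.sInf_mem hne
  have hmd : ¬ ssHasNontrivial m d (rSS m' d) := fun hcon => hmem (ss_pad hmm hcon)
  exact Nat.sInf_le hmd
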